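/- The matrix M (partitions of {1,…,9} into three 3-cells versus 2-subsets contained in a cell) has rank 28. -/

import Mathlib

set_option maxRecDepth 100000
set_option maxHeartbeats 1000000

open scoped Classical

/-- A partition of `{1,…,9}` (modelled as `Fin 9`) into three cells of size three. -/
def IsPartition33 (P : Finset (Finset (Fin 9))) : Prop :=
  P.card = 3 ∧ (∀ c ∈ P, c.card = 3) ∧ P.sup id = Finset.univ

/-- Row index type: the 280 partitions of type `3³`. -/
abbrev Part33 := {P : Finset (Finset (Fin 9)) // IsPartition33 P}

/-- Column index type: the 36 two-element subsets of `{1,…,9}`. -/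
abbrev Pair9 := {e : Finset (Fin 9) // e.card = 2}

/-- The 280 × 36 incidence matrix `M`: entry 1 iff the 2-subset is contained
in a cell of the partition. -/
noncomputable def M : Matrix Part33 Pair9 ℝ :=
  Matrix.of fun P e => if ∃ c ∈ P.1, e.1 ⊆ c then 1 else 0

/-! ### Auxiliary structural lemmas -/

lemma cell_eq {P : Finset (Finset (Fin 9))} (hP : IsPartition33 P)
    {c d : Finset (Fin 9)} (hc : c ∈ P) (hd : d ∈ P) {v : Fin 9}
    (hvc : v ∈ c) (hvd : v ∈ d) : c = d := by
  by_contra hne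
  obtain ⟨h3, hcard, hsup⟩ := hP
  have hsub : (Finset.univ : Finset (Fin 9)) ⊆ ((P.erase d).biUnion id) ∪ d.erase v := by
    intro x _
    have hx : x ∈ P.sup id := hsup ▸ Finset.mem_univ x
    rw [Finset.sup_eq_biUnion, Finset.mem_biUnion] at hx
    obtain ⟨e, heP, hxe⟩ := hx
    rcases eq_or_ne e d with rfl | hed
    · rcases eq_or_ne x v with rfl | hxv
      · exact Finset.mem_union_left _
          (Finset.mem_biUnion.mpr ⟨c, Finset.mem_erase.mpr ⟨hne, hc⟩, hvc⟩)
      · exact Finset.mem_union_right _ (Finset.mem_erase.mpr ⟨hxv, hxe⟩)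
    · exact Finset.mem_union_left _
        (Finset.mem_biUnion.mpr ⟨e, Finset.mem_erase.mpr ⟨hed, heP⟩, hxe⟩)
  have hb : ((P.erase d).biUnion id).card ≤ 6 := by
    calc ((P.erase d).biUnion id).card ≤ ∑ e ∈ P.erase d, (id e).card :=
          Finset.card_biUnion_le
      _ = ∑ _e ∈ P.erase d, 3 :=
          Finset.sum_congr rfl (fun e he => hcard e (Finset.mem_of_mem_erase he))
      _ = (P.erase d).card * 3 := by rw [Finset.sum_const, smul_eq_mul]
      _ = 6 := by rw [Finset.card_erase_of_mem hd, h3]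
  have hd2 : (d.erase v).card ≤ 2 := by
    rw [Finset.card_erase_of_mem hvd, hcard d hd]
  have h9 : (Finset.univ : Finset (Fin 9)).card ≤ 8 :=
    (Finset.card_le_card hsub).trans ((Finset.card_union_le _ _).trans (by omega))
  rw [Finset.card_univ, Fintype.card_fin] at h9
  omega

lemma exists_cell {P : Finset (Finset (Fin 9))} (hP : IsPartition33 P) (v : Fin 9) :
    ∃ c ∈ P, v ∈ c := by
  have hv : v ∈ P.sup id := hP.2.2 ▸ Finset.mem_univ v
  rwa [Finset.mem_sup] at hv

lemma count_two (P : Part33) (v : Fin 9) :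
    (Finset.univ.filter (fun e : Pair9 => v ∈ e.1 ∧ ∃ c ∈ P.1, e.1 ⊆ c)).card = 2 := by
  obtain ⟨c, hcP, hvc⟩ := exists_cell P.2 v
  have hc3 : c.card = 3 := P.2.2.1 c hcP
  have hfe : (Finset.univ.filter (fun e : Pair9 => v ∈ e.1 ∧ ∃ c ∈ P.1, e.1 ⊆ c)) =
      Finset.univ.filter (fun e : Pair9 => v ∈ e.1 ∧ e.1 ⊆ c) := by
    apply Finset.filter_congr
    intro e _
    constructor
    · rintro ⟨hv, d, hdP, hed⟩
      exact ⟨hv, by rwa [cell_eq P.2 hdP hcP (hed hv) hvc] at hed⟩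
    · rintro ⟨hv, hec⟩
      exact ⟨hv, c, hcP, hec⟩
  have h2 : (c.erase v).card = 2 := by rw [Finset.card_erase_of_mem hvc, hc3]
  rw [hfe]
  have hcard2 : ∀ w ∈ c.erase v, ({v, w} : Finset (Fin 9)).card = 2 := by
    intro w hw
    rw [Finset.card_insert_of_notMem
      (by simp [Ne.symm (Finset.ne_of_mem_erase hw)]), Finset.card_singleton]
  have hbij : (c.erase v).card =
      (Finset.univ.filter (fun e : Pair9 => v ∈ e.1 ∧ e.1 ⊆ c)).card := by
    refine (Finset.card_bij (fun w hw => (⟨{v, w}, hcard2 w hw⟩ : Pair9)) ?_ ?_ ?_)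
    · intro w hw
      rw [Finset.mem_filter]
      refine ⟨Finset.mem_univ _, by simp, ?_⟩
      rw [Finset.insert_subset_iff]
      exact ⟨hvc, Finset.singleton_subset_iff.mpr (Finset.mem_of_mem_erase hw)⟩
    · intro w₁ hw₁ w₂ hw₂ h
      have h' : ({v, w₁} : Finset (Fin 9)) = {v, w₂} := congrArg Subtype.val h
      have : w₁ ∈ ({v, w₂} : Finset (Fin 9)) := h' ▸ (by simp)
      rcases Finset.mem_insert.mp this with h1 | h1
      · exact absurd h1 (Finset.ne_of_mem_erase hw₁)
      · exact Finset.mem_singleton.mp h1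
    · intro b hb
      rw [Finset.mem_filter] at hb
      obtain ⟨-, hv, hbc⟩ := hb
      have h1 : (b.1.erase v).card = 1 := by rw [Finset.card_erase_of_mem hv, b.2]
      obtain ⟨w, hw⟩ := Finset.card_eq_one.mp h1
      have hwb : w ∈ b.1.erase v := hw ▸ Finset.mem_singleton_self w
      refine ⟨w, Finset.mem_erase.mpr
        ⟨(Finset.mem_erase.mp hwb).1, hbc (Finset.mem_of_mem_erase hwb)⟩, ?_⟩
      apply Subtype.ext
      show ({v, w} : Finset (Fin 9)) = b.1
      rw [show ({v, w} : Finset (Fin 9)) = insert v {w} from rfl, ← hw,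
        Finset.insert_erase hv]
  omega

lemma sum_row (P : Part33) (v : Fin 9) :
    ∑ e : Pair9, M P e * (if v ∈ e.1 then (1 : ℝ) else 0) = 2 := by
  have hterm : ∀ e : Pair9, M P e * (if v ∈ e.1 then (1 : ℝ) else 0)
      = if v ∈ e.1 ∧ ∃ c ∈ P.1, e.1 ⊆ c then (1 : ℝ) else 0 := by
    intro e
    by_cases ha : v ∈ e.1 <;> by_cases hb : ∃ c ∈ P.1, e.1 ⊆ c <;>
      simp [M, ha, hb]
  rw [Finset.sum_congr rfl (fun e _ => hterm e), Finset.sum_boole]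
  have := count_two P v
  norm_num [this]

/-! ### Kernel vectors -/

noncomputable def Xv : Fin 8 → (Pair9 → ℝ) := fun v e =>
  (if (v.castSucc : Fin 9) ∈ e.1 then (1 : ℝ) else 0) -
  (if (Fin.last 8 : Fin 9) ∈ e.1 then (1 : ℝ) else 0)

lemma Xv_ker (v : Fin 8) : M.mulVec (Xv v) = 0 := by
  funext P
  show ∑ e : Pair9, M P e * Xv v e = 0
  simp only [Xv, mul_sub]
  rw [Finset.sum_sub_distrib, sum_row, sum_row]
  ring

lemma Xv_indep : LinearIndependent ℝ Xv := by
  rw [Fintype.linearIndependent_iff]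
  intro g hg
  have heval : ∀ w : Fin 8, g w = ∑ u, g u := by
    intro w
    have hpair : ({(w.castSucc : Fin 9), Fin.last 8} : Finset (Fin 9)).card = 2 := by
      rw [Finset.card_insert_of_notMem (by simp [(Fin.castSucc_lt_last w).ne,
          show (w.castSucc : Fin 9) ≠ 8 from (Fin.castSucc_lt_last w).ne]),
        Finset.card_singleton]
    have hw := congrFun hg (⟨{(w.castSucc : Fin 9), Fin.last 8}, hpair⟩ : Pair9)
    have hmem : ∀ u : Fin 8,
        ((u.castSucc : Fin 9) ∈ ({(w.castSucc : Fin 9), Fin.last 8} : Finset (Fin 9)))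
          ↔ u = w := by
      intro u
      simp [Fin.castSucc_inj, (Fin.castSucc_lt_last u).ne,
        show (u.castSucc : Fin 9) ≠ 8 from (Fin.castSucc_lt_last u).ne]
    simp only [Finset.sum_apply, Pi.smul_apply, smul_eq_mul, Pi.zero_apply, Xv] at hw
    simp only [hmem, Finset.mem_insert, Finset.mem_singleton, or_true, if_true,
      if_pos rfl] at hw
    simp only [mul_sub, mul_one] at hw
    rw [Finset.sum_sub_distrib] at hw
    have hsum1 : ∑ u : Fin 8, g u * (if u = w then (1:ℝ) else 0) = g w := by
      simp [mul_ite, Finset.sum_ite_eq']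
    rw [hsum1] at hw
    linarith
  have hT : ∑ u, g u = 0 := by
    have h8 : ∑ u, g u = 8 * ∑ u, g u := by
      conv_lhs => rw [Finset.sum_congr rfl (fun w _ => heval w)]
      rw [Finset.sum_const, Finset.card_univ, Fintype.card_fin, nsmul_eq_mul]
      norm_num
    linarith
  intro i
  rw [heval i, hT]

/-! ### Explicit data for the lower bound -/

def psL : List (Finset (Finset (Fin 9))) := [
  {{0,4,5}, {1,6,7}, {2,3,8}},
  {{0,3,4}, {1,7,8}, {2,5,6}},
  {{0,2,4}, {1,3,6}, {5,7,8}},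
  {{0,1,6}, {2,3,8}, {4,5,7}},
  {{0,7,8}, {1,4,6}, {2,3,5}},
  {{0,2,7}, {1,3,5}, {4,6,8}},
  {{0,7,8}, {1,3,5}, {2,4,6}},
  {{0,2,7}, {1,6,8}, {3,4,5}},
  {{0,4,5}, {1,2,3}, {6,7,8}},
  {{0,1,8}, {2,3,5}, {4,6,7}},
  {{0,1,2}, {3,5,7}, {4,6,8}},
  {{0,3,8}, {1,4,5}, {2,6,7}},
  {{0,6,8}, {1,2,3}, {4,5,7}},
  {{0,2,4}, {1,6,8}, {3,5,7}},
  {{0,4,5}, {1,2,8}, {3,6,7}},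
  {{0,3,4}, {1,5,6}, {2,7,8}},
  {{0,3,6}, {1,4,7}, {2,5,8}},
  {{0,4,7}, {1,5,6}, {2,3,8}},
  {{0,3,8}, {1,6,7}, {2,4,5}},
  {{0,3,5}, {1,2,4}, {6,7,8}},
  {{0,5,8}, {1,3,7}, {2,4,6}},
  {{0,1,3}, {2,6,7}, {4,5,8}},
  {{0,6,8}, {1,5,7}, {2,3,4}},
  {{0,6,7}, {1,2,3}, {4,5,8}},
  {{0,3,6}, {1,2,8}, {4,5,7}},
  {{0,1,7}, {2,5,6}, {3,4,8}},
  {{0,2,7}, {1,5,8}, {3,4,6}},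
  {{0,3,8}, {1,4,7}, {2,5,6}}]

def prL : List (Finset (Fin 9)) := [{0,3}, {2,3}, {2,4}, {3,5}, {1,8}, {1,2}, {2,7}, {1,6}, {1,5}, {3,8}, {5,7}, {2,5}, {7,8}, {6,7}, {0,4}, {2,8}, {1,7}, {6,8}, {1,3}, {5,6}, {0,2}, {4,6}, {3,6}, {0,7}, {3,7}, {0,8}, {4,8}, {1,4}]

def wL : List (List ℤ) := [
  [3, 27, 2, 12, 2, 9, 0, -5, -34, -10, 1, -8, 28, -14, 22, -14, -4, 8, 6, 17, -9, 11, -2, -7, -27, -14, 7, -7],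
  [6, 82, 11, 34, 5, 29, -6, -11, -101, -25, 3, -16, 81, -46, 63, -42, -11, 27, 16, 51, -20, 26, -6, -20, -77, -38, 14, -29],
  [10, 76, 5, 36, 6, 28, 0, -17, -99, -29, 0, -25, 82, -38, 65, -38, -13, 19, 17, 50, -27, 30, -6, -19, -79, -39, 22, -18],
  [-2, 34, 11, 8, 0, 11, -9, 3, -37, -3, 4, 6, 27, -24, 18, -18, -1, 18, 4, 19, 2, 3, -3, -8, -23, -10, -5, -24],
  [-3, -18, -1, -8, -1, -5, -1, 4, 24, 7, -1, 6, -21, 9, -15, 9, 2, -5, -4, -12, 7, -8, 2, 5, 20, 9, -6, 5],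
  [2, 44, 8, 16, 2, 16, -6, -4, -53, -11, 2, -4, 42, -26, 31, -22, -5, 16, 8, 27, -7, 10, -4, -10, -38, -18, 4, -20],
  [8, 80, 9, 34, 5, 28, -4, -13, -101, -26, 2, -18, 83, -43, 63, -40, -11, 24, 16, 51, -22, 27, -7, -20, -78, -37, 17, -27],
  [-12, -74, -2, -37, -6, -26, -4, 19, 98, 31, 0, 29, -83, 35, -66, 37, 13, -16, -17, -49, 31, -33, 6, 19, 81, 40, -26, 13],
  [-10, -48, 1, -26, -5, -17, -5, 15, 66, 23, 1, 24, -57, 21, -46, 24, 10, -8, -12, -33, 24, -25, 4, 13, 56, 28, -21, 4],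
  [3, 52, 8, 21, 3, 19, -5, -6, -63, -15, 2, -8, 50, -30, 39, -27, -7, 18, 10, 32, -11, 15, -4, -13, -47, -23, 7, -20],
  [-5, -74, -10, -31, -5, -28, 6, 10, 91, 23, -2, 15, -72, 42, -58, 38, 11, -24, -15, -46, 18, -23, 5, 18, 69, 35, -12, 25],
  [2, 17, 1, 8, 1, 6, 0, -4, -22, -6, 0, -5, 19, -8, 14, -8, -2, 4, 4, 11, -6, 6, -2, -4, -18, -8, 5, -5],
  [1, 8, 0, 5, 1, 3, 1, -2, -10, -4, 0, -4, 8, -4, 8, -4, -2, 1, 2, 5, -4, 4, 0, -2, -9, -5, 3, 0],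
  [-8, -106, -14, -44, -7, -39, 8, 15, 131, 33, -3, 21, -105, 59, -82, 54, 15, -34, -21, -66, 26, -33, 8, 26, 99, 49, -18, 37],
  [9, 58, 3, 27, 5, 21, 1, -14, -76, -23, 0, -20, 64, -28, 50, -29, -10, 14, 13, 38, -22, 24, -5, -15, -61, -30, 18, -13],
  [8, 14, -7, 14, 3, 6, 9, -12, -25, -14, -3, -20, 24, -1, 22, -6, -6, -5, 6, 12, -18, 15, -1, -4, -26, -14, 17, 11],
  [-5, -26, 1, -15, -3, -10, -3, 9, 36, 13, 1, 14, -31, 11, -26, 13, 6, -4, -7, -18, 14, -14, 2, 7, 31, 16, -12, 1],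
  [-3, -44, -7, -17, -2, -15, 4, 5, 54, 12, -2, 6, -43, 25, -32, 22, 5, -15, -8, -27, 9, -12, 4, 10, 40, 19, -6, 18],
  [-7, -42, -1, -21, -4, -15, -2, 11, 56, 18, 0, 17, -47, 20, -38, 21, 8, -9, -10, -28, 18, -19, 3, 11, 46, 23, -15, 7],
  [-7, -65, -6, -29, -5, -24, 2, 12, 82, 23, -1, 17, -67, 34, -53, 33, 10, -18, -14, -41, 20, -23, 5, 16, 64, 32, -15, 19],
  [9, 41, -2, 24, 4, 15, 6, -14, -57, -21, -1, -23, 49, -17, 41, -20, -9, 5, 11, 28, -23, 22, -3, -10, -50, -26, 20, 0],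
  [-2, -43, -7, -17, -2, -15, 4, 4, 52, 12, -2, 6, -41, 25, -32, 22, 5, -15, -8, -26, 9, -12, 3, 10, 39, 19, -5, 17],
  [-5, 7, 8, -3, -1, 2, -8, 7, -3, 5, 3, 11, -1, -10, -2, -5, 2, 10, -1, 2, 9, -5, 0, -2, 3, 2, -10, -14],
  [3, -19, -8, -4, 0, -8, 8, -3, 19, 0, -2, -6, -12, 15, -9, 10, 1, -11, -2, -10, -4, 1, 1, 4, 10, 5, 6, 15],
  [-3, 1, 3, -2, -1, -1, -3, 4, 2, 3, 2, 6, -3, -3, -3, -1, 2, 4, -1, -1, 5, -3, 0, 0, 3, 2, -5, -6],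
  [7, 34, -1, 19, 4, 13, 4, -11, -47, -17, -1, -18, 40, -15, 34, -17, -8, 5, 9, 23, -18, 18, -2, -9, -40, -21, 15, -1],
  [4, 41, 4, 19, 4, 17, -2, -8, -52, -15, 0, -12, 41, -22, 35, -21, -8, 11, 9, 26, -13, 15, -2, -10, -40, -21, 9, -10],
  [-3, -39, -5, -16, -2, -13, 2, 5, 48, 12, -2, 8, -39, 22, -30, 20, 5, -13, -8, -24, 10, -13, 3, 10, 37, 18, -7, 14]]

def rowP : Fin 28 → Finset (Finset (Fin 9)) := fun i => psL.getD i.1 ∅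
def colP : Fin 28 → Finset (Fin 9) := fun i => prL.getD i.1 ∅

def sZ : Matrix (Fin 28) (Fin 28) ℤ :=
  Matrix.of fun i j => if ∃ c ∈ rowP i, colP j ⊆ c then 1 else 0
def wZ : Matrix (Fin 28) (Fin 28) ℤ :=
  Matrix.of fun i j => (wL.getD i.1 []).getD j.1 0

theorem hpart : ∀ i : Fin 28, (rowP i).card = 3 ∧ (∀ c ∈ rowP i, c.card = 3) ∧
    (rowP i).sup id = Finset.univ := by decide
theorem hpairZ : ∀ i : Fin 28, (colP i).card = 2 := by decide
theorem hSW : sZ * wZ = 1 := by decide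

noncomputable def rP : Fin 28 → Part33 := fun i => ⟨rowP i, hpart i⟩
noncomputable def cP : Fin 28 → Pair9 := fun j => ⟨colP j, hpairZ j⟩

noncomputable def Qm : Matrix (Fin 28) Part33 ℝ :=
  Matrix.of fun i P => if P = rP i then 1 else 0
noncomputable def Pm : Matrix Pair9 (Fin 28) ℝ :=
  Matrix.of fun e j => if e = cP j then 1 else 0

lemma hfactor : Qm * M * Pm = M.submatrix rP cP := by
  ext i j
  simp [Matrix.mul_apply, Qm, Pm, ite_mul, mul_ite, one_mul, zero_mul, mul_one,
    mul_zero, Finset.sum_ite_eq, Finset.sum_ite_eq']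

lemma hsub_eq : M.submatrix rP cP = sZ.map (fun x : ℤ => (x : ℝ)) := by
  ext i j
  simp only [Matrix.submatrix_apply, Matrix.map_apply, M, sZ, Matrix.of_apply, rP, cP]
  by_cases h : ∃ d ∈ rowP i, colP j ⊆ d <;> simp [h]

lemma hunit : IsUnit (M.submatrix rP cP) := by
  have h1 : M.submatrix rP cP * wZ.map (fun x : ℤ => (x : ℝ)) = 1 := by
    have : (sZ.map (fun x : ℤ => (x : ℝ))) * wZ.map (fun x : ℤ => (x : ℝ))
        = (sZ * wZ).map (fun x : ℤ => (x : ℝ)) := by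
      exact (Matrix.map_mul (f := Int.castRingHom ℝ)).symm
    rw [hsub_eq, this, hSW]
    exact Matrix.map_one _ (by norm_num) (by norm_num)
  exact (Matrix.isUnit_iff_isUnit_det _).mpr (Matrix.isUnit_det_of_right_inverse h1)

lemma hlow : 28 ≤ M.rank := by
  have h1 : (M.submatrix rP cP).rank = 28 := by
    rw [Matrix.rank_of_isUnit _ hunit, Fintype.card_fin]
  have h2 : (M.submatrix rP cP).rank ≤ M.rank := by
    rw [← hfactor]
    exact (Matrix.rank_mul_le_left _ _).trans (Matrix.rank_mul_le_right _ _)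
  omega

theorem rank_M : M.rank = 28 := by
  have hrn : M.rank + Module.finrank ℝ (LinearMap.ker M.mulVecLin) = 36 := by
    have h := LinearMap.finrank_range_add_finrank_ker M.mulVecLin
    have hc : Fintype.card Pair9 = 36 := by
      rw [Fintype.card_finset_len, Fintype.card_fin]
      decide
    rw [Matrix.rank, h, Module.finrank_pi, hc]
  have hker : 8 ≤ Module.finrank ℝ (LinearMap.ker M.mulVecLin) := by
    have hX : ∀ v, Xv v ∈ LinearMap.ker M.mulVecLin := fun v => by
      rw [LinearMap.mem_ker, Matrix.mulVecLin_apply]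
      exact Xv_ker v
    have hind : LinearIndependent ℝ
        (fun v : Fin 8 => (⟨Xv v, hX v⟩ : LinearMap.ker M.mulVecLin)) := by
      apply LinearIndependent.of_comp (LinearMap.ker M.mulVecLin).subtype
      exact Xv_indep
    simpa using hind.fintype_card_le_finrank
  have := hlow
  omega
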